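/- Let L be a monolithic Leibniz algebra. Then L is a strongly solvable A-algebra if and only if L is metabelian and L = L² ∔ B for some subalgebra B of L such that [L²,b] = L² for every nonzero b ∈ B (equivalently, the right multiplication R_b restricted to L² is invertible for every nonzero b ∈ B). -/

import Mathlib

/-- A (right) Leibniz algebra structure on an `F`-vector space `L`:
a bilinear bracket satisfying `[x,[y,z]] = [[x,y],z] - [[x,z],y]`. -/
structure LeibnizAlg (F : Type*) (L : Type*) [Field F] [AddCommGroup L] [Module F L] where
  bracket : L →ₗ[F] L →ₗ[F] L
  leibniz : ∀ x y z : L,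
    bracket x (bracket y z) = bracket (bracket x y) z - bracket (bracket x z) y

namespace LeibnizAlg

variable {F : Type*} {L : Type*} [Field F] [AddCommGroup L] [Module F L]

/-- The product `[M, N]` of two subspaces: the span of all brackets `[m, n]`. -/
def prod (A : LeibnizAlg F L) (M N : Submodule F L) : Submodule F L :=
  Submodule.span F {z : L | ∃ m ∈ M, ∃ n ∈ N, z = A.bracket m n}

/-- A subalgebra: a subspace closed under the product. -/
def IsSubalgebra (A : LeibnizAlg F L) (S : Submodule F L) : Prop :=
  A.prod S S ≤ S

/-- A (two-sided) ideal: `[I, L] ⊆ I` and `[L, I] ⊆ I`. -/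
def IsIdeal (A : LeibnizAlg F L) (I : Submodule F L) : Prop :=
  A.prod I ⊤ ≤ I ∧ A.prod ⊤ I ≤ I

/-- Lower central series of a subspace `U`: `lcs U 0 = U = U¹`,
`lcs U k = U^(k+1)`, i.e. `lcs U (k+1) = [lcs U k, U]`. -/
def lcs (A : LeibnizAlg F L) (U : Submodule F L) : ℕ → Submodule F L
  | 0 => U
  | k + 1 => A.prod (lcs A U k) U

/-- `U` is nilpotent: `U^(n+1) = 0` for some `n`. -/
def IsNilpotentSub (A : LeibnizAlg F L) (U : Submodule F L) : Prop :=
  ∃ n : ℕ, A.lcs U n = ⊥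

/-- `U` is abelian: `[U, U] = 0`. -/
def IsAbelian (A : LeibnizAlg F L) (U : Submodule F L) : Prop :=
  A.prod U U = ⊥

/-- An `A`-algebra: every nilpotent subalgebra is abelian. -/
def IsAAlgebra (A : LeibnizAlg F L) : Prop :=
  ∀ U : Submodule F L, A.IsSubalgebra U → A.IsNilpotentSub U → A.IsAbelian U

/-- Derived series: `derSeries 0 = L`, `derSeries (k+1) = [derSeries k, derSeries k]`. -/
def derSeries (A : LeibnizAlg F L) : ℕ → Submodule F L
  | 0 => ⊤
  | k + 1 => A.prod (derSeries A k) (derSeries A k)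

/-- `L` is solvable: some term of the derived series vanishes. -/
def IsSolvable (A : LeibnizAlg F L) : Prop :=
  ∃ n : ℕ, A.derSeries n = ⊥

/-- The centralizer `Z_L(U)` of a subspace `U`. -/
def centralizer (A : LeibnizAlg F L) (U : Submodule F L) : Submodule F L where
  carrier := {x : L | ∀ u ∈ U, A.bracket x u = 0 ∧ A.bracket u x = 0}
  add_mem' := by
    intro a b ha hb u hu
    refine ⟨?_, ?_⟩
    · rw [map_add, LinearMap.add_apply, (ha u hu).1, (hb u hu).1, add_zero]
    · rw [map_add, (ha u hu).2, (hb u hu).2, add_zero]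
  zero_mem' := by
    intro u hu
    refine ⟨?_, ?_⟩
    · rw [map_zero, LinearMap.zero_apply]
    · rw [map_zero]
  smul_mem' := by
    intro c a ha u hu
    refine ⟨?_, ?_⟩
    · rw [map_smul, LinearMap.smul_apply, (ha u hu).1, smul_zero]
    · rw [map_smul, (ha u hu).2, smul_zero]

/-- The centre of the subalgebra `M`: elements of `M` centralizing `M`. -/
def centerOf (A : LeibnizAlg F L) (M : Submodule F L) : Submodule F L :=
  M ⊓ A.centralizer M

/-- `N` is the nilradical: the largest nilpotent ideal. -/
def IsNilradical (A : LeibnizAlg F L) (N : Submodule F L) : Prop :=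
  A.IsIdeal N ∧ A.IsNilpotentSub N ∧
    ∀ I : Submodule F L, A.IsIdeal I → A.IsNilpotentSub I → I ≤ N

/-- A minimal ideal: a nonzero ideal containing no ideal other than `0` and itself. -/
def IsMinimalIdeal (A : LeibnizAlg F L) (I : Submodule F L) : Prop :=
  A.IsIdeal I ∧ I ≠ ⊥ ∧ ∀ J : Submodule F L, A.IsIdeal J → J ≤ I → J = ⊥ ∨ J = I

/-- A maximal subalgebra. -/
def IsMaximalSubalgebra (A : LeibnizAlg F L) (M : Submodule F L) : Prop :=
  A.IsSubalgebra M ∧ M ≠ ⊤ ∧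
    ∀ S : Submodule F L, A.IsSubalgebra S → M ≤ S → S = M ∨ S = ⊤

/-- `L` is φ-free: every ideal contained in all maximal subalgebras is zero. -/
def IsPhiFree (A : LeibnizAlg F L) : Prop :=
  ∀ I : Submodule F L, A.IsIdeal I →
    (∀ M : Submodule F L, A.IsMaximalSubalgebra M → I ≤ M) → I = ⊥

/-- `Asoc L`: the sum of the abelian minimal ideals. -/
def asoc (A : LeibnizAlg F L) : Submodule F L :=
  sSup {I : Submodule F L | A.IsMinimalIdeal I ∧ A.IsAbelian I}

/-- A Cartan subalgebra: a nilpotent, self-normalizing subalgebra. -/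
def IsCartan (A : LeibnizAlg F L) (C : Submodule F L) : Prop :=
  A.IsSubalgebra C ∧ A.IsNilpotentSub C ∧
    ∀ x : L, (∀ c ∈ C, A.bracket x c ∈ C ∧ A.bracket c x ∈ C) → x ∈ C

/-- A maximal nilpotent subalgebra. -/
def IsMaxNilpotentSubalgebra (A : LeibnizAlg F L) (U : Submodule F L) : Prop :=
  A.IsSubalgebra U ∧ A.IsNilpotentSub U ∧
    ∀ V : Submodule F L, A.IsSubalgebra V → A.IsNilpotentSub V → U ≤ V → V = U

end LeibnizAlg

namespace LeibnizAlg

variable {F : Type*} {L : Type*} [Field F] [AddCommGroup L] [Module F L]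

theorem mem_prod (A : LeibnizAlg F L) {M N : Submodule F L} {m n : L}
    (hm : m ∈ M) (hn : n ∈ N) : A.bracket m n ∈ A.prod M N :=
  Submodule.subset_span ⟨m, hm, n, hn, rfl⟩

theorem prod_le_iff (A : LeibnizAlg F L) {M N P : Submodule F L} :
    A.prod M N ≤ P ↔ ∀ m ∈ M, ∀ n ∈ N, A.bracket m n ∈ P := by
  constructor
  · intro h m hm n hn; exact h (A.mem_prod hm hn)
  · intro h
    refine Submodule.span_le.2 ?_
    rintro z ⟨m, hm, n, hn, rfl⟩
    exact h m hm n hn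

theorem prod_mono (A : LeibnizAlg F L) {M M' N N' : Submodule F L}
    (h1 : M ≤ M') (h2 : N ≤ N') : A.prod M N ≤ A.prod M' N' :=
  A.prod_le_iff.2 fun m hm n hn => A.mem_prod (h1 hm) (h2 hn)

theorem derSeries_one (A : LeibnizAlg F L) : A.derSeries 1 = A.prod ⊤ ⊤ := rfl

theorem bracket_mem_der (A : LeibnizAlg F L) (y z : L) :
    A.bracket y z ∈ A.derSeries 1 :=
  A.mem_prod Submodule.mem_top Submodule.mem_top

theorem prod_le_der (A : LeibnizAlg F L) (M N : Submodule F L) :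
    A.prod M N ≤ A.derSeries 1 :=
  A.prod_le_iff.2 fun m _ n _ => A.bracket_mem_der m n

theorem der_isIdeal (A : LeibnizAlg F L) : A.IsIdeal (A.derSeries 1) :=
  ⟨A.prod_le_der _ _, A.prod_le_der _ _⟩

theorem exists_minimalIdeal_le [FiniteDimensional F L] (A : LeibnizAlg F L)
    {I : Submodule F L} (hI : A.IsIdeal I) (hIbot : I ≠ ⊥) :
    ∃ J, A.IsMinimalIdeal J ∧ J ≤ I := by
  set S : Set ℕ :=
    {n | ∃ J : Submodule F L, A.IsIdeal J ∧ J ≠ ⊥ ∧ J ≤ I ∧ Module.finrank F J = n} with hSdef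
  have hS : S.Nonempty := ⟨Module.finrank F I, I, hI, hIbot, le_rfl, rfl⟩
  obtain ⟨J, hJid, hJbot, hJI, hJrank⟩ := Nat.sInf_mem hS
  refine ⟨J, ⟨hJid, hJbot, ?_⟩, hJI⟩
  intro J' hJ' hle
  by_cases h : J' = ⊥
  · exact Or.inl h
  · refine Or.inr ?_
    have h2 : sInf S ≤ Module.finrank F J' :=
      Nat.sInf_le ⟨J', hJ', h, hle.trans hJI, rfl⟩
    exact Submodule.eq_of_le_of_finrank_le hle (by omega)

theorem monolith_le [FiniteDimensional F L] (A : LeibnizAlg F L) {W : Submodule F L}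
    (hmono : ∀ I : Submodule F L, A.IsMinimalIdeal I → I = W)
    {I : Submodule F L} (hI : A.IsIdeal I) (hIbot : I ≠ ⊥) : W ≤ I := by
  obtain ⟨J, hJ, hJI⟩ := A.exists_minimalIdeal_le hI hIbot
  exact (hmono J hJ) ▸ hJI

theorem pow_bracket_left (A : LeibnizAlg F L) {M : Submodule F L}
    (hM1 : ∀ y ∈ M, ∀ n ∈ A.derSeries 1, A.bracket y n = 0)
    (hNM : A.derSeries 1 ≤ M)
    (x : L) (k : ℕ) {y : L} (hy : y ∈ M) (z : L) :
    (A.bracket.flip x ^ k) (A.bracket y z)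
      = A.bracket ((A.bracket.flip x ^ k) y) z := by
  induction k generalizing y with
  | zero => simp
  | succ k ih =>
    have hstep : A.bracket.flip x (A.bracket y z) = A.bracket (A.bracket.flip x y) z := by
      have h0 : A.bracket y (A.bracket z x) = 0 :=
        hM1 y hy _ (A.bracket_mem_der z x)
      have h := A.leibniz y z x
      rw [h0] at h
      simp only [LinearMap.flip_apply]
      exact sub_eq_zero.mp h.symm
    rw [pow_succ, Module.End.mul_apply, hstep, ih (y := A.bracket.flip x y) (hNM (A.bracket_mem_der y x)),
      ← Module.End.mul_apply, ← pow_succ]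

theorem pow_bracket_right (A : LeibnizAlg F L) {M : Submodule F L}
    (hM2 : ∀ n ∈ A.derSeries 1, ∀ y ∈ M, A.bracket n y = 0)
    (hNM : A.derSeries 1 ≤ M)
    (x : L) (k : ℕ) {y : L} (hy : y ∈ M) (z : L) :
    (A.bracket.flip x ^ k) (A.bracket z y)
      = A.bracket z ((A.bracket.flip x ^ k) y) := by
  induction k generalizing y with
  | zero => simp
  | succ k ih =>
    have hstep : A.bracket.flip x (A.bracket z y) = A.bracket z (A.bracket.flip x y) := by
      have h0 : A.bracket (A.bracket z x) y = 0 :=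
        hM2 _ (A.bracket_mem_der z x) y hy
      have h := A.leibniz z y x
      rw [h0, sub_zero] at h
      simp only [LinearMap.flip_apply]
      exact h.symm
    rw [pow_succ, Module.End.mul_apply, hstep,
      ih (y := A.bracket.flip x y) (hNM (A.bracket_mem_der y x))]
    congr 1

theorem flip_deriv (A : LeibnizAlg F L) (x y z : L) :
    A.bracket.flip x (A.bracket y z)
      = A.bracket (A.bracket.flip x y) z + A.bracket y (A.bracket.flip x z) := by
  simp only [LinearMap.flip_apply]
  rw [A.leibniz y z x]
  abel

theorem pow_apply_bracket_eq_zero (A : LeibnizAlg F L) (x : L) :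
    ∀ (n p q : ℕ) (y z : L), p + q = n → (A.bracket.flip x ^ p) y = 0 →
      (A.bracket.flip x ^ q) z = 0 → (A.bracket.flip x ^ n) (A.bracket y z) = 0 := by
  intro n
  induction n with
  | zero =>
    rintro p q y z hpq hy hz
    obtain ⟨rfl, rfl⟩ := Nat.add_eq_zero.mp hpq
    simp only [pow_zero, Module.End.one_apply] at hy hz ⊢
    rw [hy, map_zero, LinearMap.zero_apply]
  | succ n ih =>
    rintro p q y z hpq hy hz
    match p, q with
    | 0, q =>
      simp only [pow_zero, Module.End.one_apply] at hy
      rw [hy, map_zero, LinearMap.zero_apply, map_zero]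
    | p + 1, 0 =>
      simp only [pow_zero, Module.End.one_apply] at hz
      rw [hz, map_zero, map_zero]
    | p + 1, q + 1 =>
      have h1 : (A.bracket.flip x ^ (n+1)) (A.bracket y z)
          = (A.bracket.flip x ^ n) (A.bracket.flip x (A.bracket y z)) := by
        rw [pow_succ, Module.End.mul_apply]
      rw [h1, A.flip_deriv, map_add]
      have hy' : (A.bracket.flip x ^ p) (A.bracket.flip x y) = 0 := by
        rwa [← Module.End.mul_apply, ← pow_succ]
      have hz' : (A.bracket.flip x ^ q) (A.bracket.flip x z) = 0 := by
        rwa [← Module.End.mul_apply, ← pow_succ]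
      rw [ih p (q+1) _ z (by omega) hy' hz, ih (p+1) q y _ (by omega) hy hz', add_zero]

theorem fitting_dichotomy [FiniteDimensional F L] (A : LeibnizAlg F L)
    {W : Submodule F L} (hWbot : W ≠ ⊥)
    (hmono : ∀ I : Submodule F L, A.IsMinimalIdeal I → I = W)
    {M : Submodule F L} (hNM : A.derSeries 1 ≤ M)
    (hM1 : ∀ y ∈ M, ∀ n ∈ A.derSeries 1, A.bracket y n = 0)
    (hM2 : ∀ n ∈ A.derSeries 1, ∀ y ∈ M, A.bracket n y = 0)
    (x : L) :
    (∃ k, ∀ y ∈ M, (A.bracket.flip x ^ k) y = 0) ∨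
      Submodule.map (A.bracket.flip x) M = M := by
  set f := A.bracket.flip x with hf
  have hfM : ∀ y ∈ M, f y ∈ M := fun y _ => hNM (A.bracket_mem_der y x)
  set g : M →ₗ[F] M := f.restrict hfM with hg
  obtain ⟨n, hn1, hcompl⟩ :
      ∃ n, 1 ≤ n ∧ IsCompl (LinearMap.ker (g ^ n)) (LinearMap.range (g ^ n)) := by
    obtain ⟨n, hn⟩ := ((Filter.eventually_ge_atTop 1).and
      g.eventually_isCompl_ker_pow_range_pow).exists
    exact ⟨n, hn.1, hn.2⟩
  have hgpow : ∀ (k : ℕ) (w : M), ((g ^ k) w : L) = (f ^ k) (w : L) := by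
    intro k w
    rw [Module.End.pow_restrict k hfM, LinearMap.restrict_apply]
  set N0 : Submodule F L := Submodule.map M.subtype (LinearMap.ker (g ^ n)) with hN0
  set N1 : Submodule F L := Submodule.map M.subtype (LinearMap.range (g ^ n)) with hN1
  have hN0mem : ∀ z : L, z ∈ N0 ↔ z ∈ M ∧ (f ^ n) z = 0 := by
    intro z
    constructor
    · rintro ⟨w, hw, rfl⟩
      refine ⟨w.2, ?_⟩
      rw [Submodule.subtype_apply, ← hgpow, LinearMap.mem_ker.mp hw, Submodule.coe_zero]
    · rintro ⟨hzM, hz⟩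
      refine ⟨⟨z, hzM⟩, ?_, rfl⟩
      show (g ^ n) ⟨z, hzM⟩ = 0
      apply Subtype.ext
      rw [hgpow, Submodule.coe_zero]
      exact hz
  have hN1mem : ∀ z : L, z ∈ N1 ↔ ∃ y ∈ M, (f ^ n) y = z := by
    intro z
    constructor
    · rintro ⟨w, ⟨v, hv⟩, rfl⟩
      exact ⟨v, v.2, by rw [← hgpow, hv, Submodule.subtype_apply]⟩
    · rintro ⟨y, hyM, hy⟩
      exact ⟨(g ^ n) ⟨y, hyM⟩, ⟨⟨y, hyM⟩, rfl⟩, by rw [Submodule.subtype_apply, hgpow]; exact hy⟩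
  have hN0id : A.IsIdeal N0 := by
    constructor
    · rw [prod_le_iff]
      intro m hm z _
      obtain ⟨hmM, hm0⟩ := (hN0mem m).mp hm
      refine (hN0mem _).mpr ⟨hNM (A.bracket_mem_der m z), ?_⟩
      rw [A.pow_bracket_left hM1 hNM x n hmM z, hm0, map_zero, LinearMap.zero_apply]
    · rw [prod_le_iff]
      intro z _ m hm
      obtain ⟨hmM, hm0⟩ := (hN0mem m).mp hm
      refine (hN0mem _).mpr ⟨hNM (A.bracket_mem_der z m), ?_⟩
      rw [A.pow_bracket_right hM2 hNM x n hmM z, hm0, map_zero]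
  have hN1id : A.IsIdeal N1 := by
    constructor
    · rw [prod_le_iff]
      intro m hm z _
      obtain ⟨y, hyM, rfl⟩ := (hN1mem m).mp hm
      refine (hN1mem _).mpr ⟨A.bracket y z, hNM (A.bracket_mem_der y z), ?_⟩
      rw [A.pow_bracket_left hM1 hNM x n hyM z]
    · rw [prod_le_iff]
      intro z _ m hm
      obtain ⟨y, hyM, rfl⟩ := (hN1mem m).mp hm
      refine (hN1mem _).mpr ⟨A.bracket z y, hNM (A.bracket_mem_der z y), ?_⟩
      rw [A.pow_bracket_right hM2 hNM x n hyM z]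
  have hinf : N0 ⊓ N1 = ⊥ := by
    rw [hN0, hN1, ← Submodule.map_inf _ (Submodule.injective_subtype M),
      hcompl.inf_eq_bot, Submodule.map_bot]
  by_cases hbot : N1 = ⊥
  · left
    refine ⟨n, fun y hy => ?_⟩
    have hmem : (f ^ n) y ∈ N1 := (hN1mem _).mpr ⟨y, hy, rfl⟩
    rwa [hbot, Submodule.mem_bot] at hmem
  · by_cases hbot0 : N0 = ⊥
    · right
      have hker : LinearMap.ker (g ^ n) = ⊥ := by
        rw [eq_bot_iff]
        intro w hw
        have h1 : (w : L) ∈ N0 := ⟨w, hw, rfl⟩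
        rw [hbot0, Submodule.mem_bot] at h1
        rw [Submodule.mem_bot]
        exact Subtype.ext h1
      have hginj : Function.Injective g := by
        rw [← LinearMap.ker_eq_bot, eq_bot_iff]
        intro w hw
        have hw' : w ∈ LinearMap.ker (g ^ n) := by
          rw [LinearMap.mem_ker]
          obtain ⟨m, rfl⟩ := Nat.exists_eq_succ_of_ne_zero (by omega : n ≠ 0)
          rw [pow_succ, Module.End.mul_apply, LinearMap.mem_ker.mp hw, map_zero]
        rw [hker] at hw'
        exact hw'
      have hgsurj : Function.Surjective g := LinearMap.injective_iff_surjective.mp hginj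
      apply le_antisymm
      · exact Submodule.map_le_iff_le_comap.mpr fun y hy => hfM y hy
      · intro y hyM
        obtain ⟨w, hw⟩ := hgsurj ⟨y, hyM⟩
        refine ⟨w, w.2, ?_⟩
        have := congrArg (Subtype.val) hw
        rwa [LinearMap.restrict_coe_apply] at this
    · exfalso
      have hW0 : W ≤ N0 := A.monolith_le hmono hN0id hbot0
      have hW1 : W ≤ N1 := A.monolith_le hmono hN1id hbot
      apply hWbot
      rw [eq_bot_iff, ← hinf]
      exact le_inf hW0 hW1

theorem nilpotent_action (A : LeibnizAlg F L) (hA : A.IsAAlgebra)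
    (habN : A.prod (A.derSeries 1) (A.derSeries 1) = ⊥)
    (x : L) (k : ℕ) (hk : ∀ y ∈ A.derSeries 1, (A.bracket.flip x ^ k) y = 0) :
    (∀ y ∈ A.derSeries 1, A.bracket y x = 0 ∧ A.bracket x y = 0) ∧ A.bracket x x = 0 := by
  set N := A.derSeries 1 with hN
  set U : Submodule F L := N ⊔ Submodule.span F {x} with hU
  have hxU : x ∈ U := (le_sup_right : Submodule.span F {x} ≤ U) (Submodule.mem_span_singleton_self x)
  have hNU : N ≤ U := le_sup_left
  have hsub : A.IsSubalgebra U := le_trans (A.prod_le_der U U) hNU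
  have hstep : ∀ S : Submodule F L, S ≤ N →
      A.prod S U ≤ Submodule.map (A.bracket.flip x) S := by
    intro S hS
    rw [prod_le_iff]
    intro m hm u hu
    rw [hU, Submodule.mem_sup] at hu
    obtain ⟨n', hn', v, hv, rfl⟩ := hu
    rw [Submodule.mem_span_singleton] at hv
    obtain ⟨c, rfl⟩ := hv
    rw [map_add, map_smul]
    have h1 : A.bracket m n' = 0 := by
      have h2 : A.bracket m n' ∈ A.prod N N := A.mem_prod (hS hm) hn'
      rwa [habN, Submodule.mem_bot] at h2
    rw [h1, zero_add]
    exact Submodule.smul_mem _ c ⟨m, hm, rfl⟩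
  have hfN : ∀ y ∈ N, A.bracket.flip x y ∈ N := fun y _ => A.bracket_mem_der y x
  have hlcs : ∀ j, A.lcs U (j+1) ≤ Submodule.map (A.bracket.flip x ^ j) N := by
    intro j
    induction j with
    | zero =>
      rw [show A.lcs U 1 = A.prod U U from rfl, pow_zero]
      refine le_trans (A.prod_le_der U U) ?_
      intro y hy
      exact ⟨y, hy, rfl⟩
    | succ j ih =>
      rw [show A.lcs U (j+2) = A.prod (A.lcs U (j+1)) U from rfl]
      have h3 : Submodule.map (A.bracket.flip x ^ j) N ≤ N := by
        rintro y ⟨m, hm, rfl⟩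
        exact Module.End.pow_apply_mem_of_forall_mem j hfN m hm
      refine le_trans (A.prod_mono ih le_rfl) (le_trans (hstep _ h3) ?_)
      rw [pow_succ', Module.End.mul_eq_comp, Submodule.map_comp]
  have hnil : A.IsNilpotentSub U := by
    refine ⟨k + 1, ?_⟩
    rw [eq_bot_iff]
    refine le_trans (hlcs k) ?_
    rintro y ⟨m, hm, rfl⟩
    rw [Submodule.mem_bot]
    exact hk m hm
  have hab := hA U hsub hnil
  rw [IsAbelian] at hab
  have hmem : ∀ a b : L, a ∈ U → b ∈ U → A.bracket a b = 0 := by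
    intro a b ha hb
    have h2 := A.mem_prod ha hb
    rwa [hab, Submodule.mem_bot] at h2
  exact ⟨fun y hy => ⟨hmem y x (hNU hy) hxU, hmem x y hxU (hNU hy)⟩, hmem x x hxU hxU⟩

theorem map_der_eq [FiniteDimensional F L] (A : LeibnizAlg F L)
    {W : Submodule F L} (hWbot : W ≠ ⊥)
    (hmono : ∀ I : Submodule F L, A.IsMinimalIdeal I → I = W)
    (hA : A.IsAAlgebra)
    (habN : A.prod (A.derSeries 1) (A.derSeries 1) = ⊥)
    (hNbot : A.derSeries 1 ≠ ⊥)
    {x : L} (hx : x ∉ A.derSeries 1) :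
    Submodule.map (A.bracket.flip x) (A.derSeries 1) = A.derSeries 1 := by
  set N := A.derSeries 1 with hN
  have habN' : ∀ a ∈ N, ∀ b ∈ N, A.bracket a b = 0 := by
    intro a ha b hb
    have h2 := A.mem_prod ha hb
    rwa [habN, Submodule.mem_bot] at h2
  set K : Submodule F L :=
    { carrier := {z | ∀ y ∈ N, A.bracket y z = 0}
      add_mem' := by intro a b ha hb y hy; rw [map_add, ha y hy, hb y hy, add_zero]
      zero_mem' := fun y _ => map_zero _
      smul_mem' := by intro c a ha y hy; rw [map_smul, ha y hy, smul_zero] } with hK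
  have hKmem : ∀ z : L, z ∈ K ↔ ∀ y ∈ N, A.bracket y z = 0 := fun z => Iff.rfl
  have hNK : N ≤ K := fun z hz => (hKmem z).mpr (fun y hy => habN' y hy z hz)
  have hKl : ∀ k ∈ K, ∀ y ∈ N, A.bracket k y = 0 := by
    intro k hk y hy
    have h1 : ∀ y ∈ N, (A.bracket.flip k ^ 1) y = 0 := by
      intro y hy
      rw [pow_one]
      exact (hKmem k).mp hk y hy
    exact ((A.nilpotent_action hA habN k 1 h1).1 y hy).2
  have hKN : K ≤ N := by
    by_contra hKN
    have hzero : ∀ (x' : L), ∀ y ∈ N, A.bracket y x' = 0 := by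
      intro x'
      have hdi := A.fitting_dichotomy hWbot hmono (M := K) hNK hKl
        (fun n hn y hy => (hKmem y).mp hy n hn) x'
      rcases hdi with ⟨k, hk⟩ | hmap
      · have hkN : ∀ y ∈ N, (A.bracket.flip x' ^ k) y = 0 := fun y hy => hk y (hNK hy)
        exact fun y hy => ((A.nilpotent_action hA habN x' k hkN).1 y hy).1
      · exfalso
        apply hKN
        rw [← hmap]
        rintro z ⟨m, _, rfl⟩
        exact A.bracket_mem_der m x'
    have hlcs2 : A.lcs ⊤ 2 = ⊥ := by
      rw [show A.lcs ⊤ 2 = A.prod (A.prod ⊤ ⊤) ⊤ from rfl, eq_bot_iff, prod_le_iff]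
      intro m hm n _
      rw [Submodule.mem_bot]
      exact hzero n m hm
    have habtop := hA ⊤ le_top ⟨2, hlcs2⟩
    rw [IsAbelian] at habtop
    exact hNbot (by rw [hN, derSeries_one]; exact habtop)
  have hxK : x ∉ K := fun h => hx (hKN h)
  have hdi := A.fitting_dichotomy hWbot hmono (M := N) le_rfl
      (fun y hy n hn => habN' y hy n hn) (fun n hn y hy => habN' n hn y hy) x
  rcases hdi with ⟨k, hk⟩ | hmap
  · exfalso
    apply hxK
    rw [hKmem]
    intro y hy
    exact ((A.nilpotent_action hA habN x k hk).1 y hy).1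
  · exact hmap

theorem inj_on_der [FiniteDimensional F L] (A : LeibnizAlg F L) {x : L}
    (hmap : Submodule.map (A.bracket.flip x) (A.derSeries 1) = A.derSeries 1) :
    ∀ (k : ℕ) (y : L), y ∈ A.derSeries 1 → (A.bracket.flip x ^ k) y = 0 → y = 0 := by
  set N := A.derSeries 1 with hN
  have hfN : ∀ y ∈ N, A.bracket.flip x y ∈ N := fun y _ => A.bracket_mem_der y x
  set g := (A.bracket.flip x).restrict hfN with hg
  have hgsurj : Function.Surjective g := by
    intro z
    have h2 : (z : L) ∈ Submodule.map (A.bracket.flip x) N := hmap.symm ▸ z.2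
    obtain ⟨w, hw, hw2⟩ := h2
    exact ⟨⟨w, hw⟩, Subtype.ext (by rw [LinearMap.restrict_coe_apply]; exact hw2)⟩
  have hginj : Function.Injective g := LinearMap.injective_iff_surjective.mpr hgsurj
  intro k
  induction k with
  | zero =>
    intro y _ h0
    rwa [pow_zero, Module.End.one_apply] at h0
  | succ k ih =>
    intro y hy h0
    rw [pow_succ, Module.End.mul_apply] at h0
    have h1 : A.bracket.flip x y = 0 := ih _ (hfN y hy) h0
    have h2 : g ⟨y, hy⟩ = 0 := Subtype.ext (by rw [LinearMap.restrict_coe_apply]; exact h1)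
    have h3 : (⟨y, hy⟩ : N) = 0 := hginj (by rw [h2, map_zero])
    exact congrArg Subtype.val h3


theorem forward_dir [FiniteDimensional F L] (A : LeibnizAlg F L)
    {W : Submodule F L} (hWbot : W ≠ ⊥)
    (hmono : ∀ I : Submodule F L, A.IsMinimalIdeal I → I = W)
    (hnil : A.IsNilpotentSub (A.derSeries 1)) (hA : A.IsAAlgebra) :
    A.IsAbelian (A.derSeries 1) ∧
      ∃ B : Submodule F L, A.IsSubalgebra B ∧
        A.derSeries 1 ⊓ B = ⊥ ∧ A.derSeries 1 ⊔ B = ⊤ ∧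
        ∀ b ∈ B, b ≠ 0 →
          Submodule.map (A.bracket.flip b) (A.derSeries 1) = A.derSeries 1 := by
  set N := A.derSeries 1 with hN
  have habN : A.IsAbelian N := hA N (A.prod_le_der N N) hnil
  refine ⟨habN, ?_⟩
  by_cases hNbot : N = ⊥
  · refine ⟨⊤, le_top, ?_, ?_, ?_⟩
    · rw [inf_top_eq]; exact hNbot
    · rw [sup_top_eq]
    · intro b _ _
      rw [hNbot, Submodule.map_bot]
  · have hNtop : N ≠ ⊤ := by
      intro h
      have habtop := hA ⊤ le_top (h ▸ hnil)
      rw [IsAbelian] at habtop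
      exact hNbot (by rw [hN, derSeries_one]; exact habtop)
    obtain ⟨x₀, hx₀⟩ : ∃ x : L, x ∉ N := by
      by_contra h
      push_neg at h
      exact hNtop (Submodule.eq_top_iff'.mpr h)
    rw [IsAbelian] at habN
    have hmap := A.map_der_eq hWbot hmono hA habN hNbot hx₀
    have hinj := A.inj_on_der hmap
    rw [← hN] at hmap
    set B := LinearMap.ker (A.bracket.flip x₀) with hB
    have hinf : N ⊓ B = ⊥ := by
      rw [eq_bot_iff]
      rintro z ⟨hz1, hz2⟩
      rw [Submodule.mem_bot]
      refine hinj 1 z hz1 ?_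
      rw [pow_one]
      exact hz2
    refine ⟨B, ?_, hinf, ?_, ?_⟩
    · rw [IsSubalgebra, prod_le_iff]
      intro m hm n hn
      have h2 : (A.bracket.flip x₀ ^ 2) (A.bracket m n) = 0 :=
        A.pow_apply_bracket_eq_zero x₀ 2 1 1 m n rfl
          (by rw [pow_one]; exact LinearMap.mem_ker.mp hm)
          (by rw [pow_one]; exact LinearMap.mem_ker.mp hn)
      have h3 : A.bracket m n = 0 := hinj 2 _ (A.bracket_mem_der m n) h2
      rw [h3]; exact zero_mem B
    · rw [eq_top_iff]
      intro z _
      have h1 : A.bracket.flip x₀ z ∈ N := A.bracket_mem_der z x₀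
      rw [← hmap] at h1
      obtain ⟨m, hm, hfm⟩ := h1
      refine Submodule.mem_sup.mpr ⟨m, hm, z - m, ?_, by abel⟩
      rw [LinearMap.mem_ker, map_sub, hfm, sub_self]
    · intro b hb hbne
      have hbN : b ∉ N := by
        intro h
        have h2 : b ∈ N ⊓ B := ⟨h, hb⟩
        rw [hinf, Submodule.mem_bot] at h2
        exact hbne h2
      exact A.map_der_eq hWbot hmono hA habN hNbot hbN

theorem reverse_dir [FiniteDimensional F L] (A : LeibnizAlg F L)
    (hab : A.IsAbelian (A.derSeries 1))
    {B : Submodule F L}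
    (hinf : A.derSeries 1 ⊓ B = ⊥) (hsup : A.derSeries 1 ⊔ B = ⊤)
    (hbmap : ∀ b ∈ B, b ≠ 0 →
      Submodule.map (A.bracket.flip b) (A.derSeries 1) = A.derSeries 1) :
    A.IsNilpotentSub (A.derSeries 1) ∧ A.IsAAlgebra := by
  set N := A.derSeries 1 with hN
  rw [IsAbelian] at hab
  constructor
  · exact ⟨1, hab⟩
  · intro U hUsub hUnil
    by_cases hUN : U ≤ N
    · rw [IsAbelian, eq_bot_iff]
      exact le_trans (A.prod_mono hUN hUN) hab.le
    · obtain ⟨u, huU, huN⟩ : ∃ u ∈ U, u ∉ N := by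
        by_contra h
        push_neg at h
        exact hUN h
      have hu2 : u ∈ N ⊔ B := by rw [hsup]; trivial
      obtain ⟨n', hn', b, hb, hub⟩ := Submodule.mem_sup.mp hu2
      have hbne : b ≠ 0 := by
        rintro rfl
        exact huN (by rw [← hub, add_zero]; exact hn')
      have hmapb := hbmap b hb hbne
      have hptw : ∀ y ∈ N, A.bracket.flip u y = A.bracket.flip b y := by
        intro y hy
        have h0 : A.bracket y n' = 0 := by
          have h2 := A.mem_prod hy hn'
          rwa [hab, Submodule.mem_bot] at h2
        simp only [LinearMap.flip_apply]
        rw [← hub, map_add, h0, zero_add]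
      have hmapu : Submodule.map (A.bracket.flip u) N = N := by
        apply le_antisymm
        · rintro z ⟨m, hm, rfl⟩
          rw [← hmapb]
          exact ⟨m, hm, (hptw m hm).symm⟩
        · intro z hz
          rw [← hmapb] at hz
          obtain ⟨m, hm, rfl⟩ := hz
          exact ⟨m, hm, hptw m hm⟩
      have hinj := A.inj_on_der hmapu
      have hled : ∀ k, A.lcs U (k+1) ≤ N := fun k => A.prod_le_der _ _
      rw [IsAbelian]
      by_contra hUU
      have hchain : ∀ k, A.lcs U (k+1) ≠ ⊥ := by
        intro k
        induction k with
        | zero => exact hUU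
        | succ k ih =>
          obtain ⟨y, hy, hyne⟩ := (Submodule.ne_bot_iff _).mp ih
          intro hbot2
          have hm : A.bracket y u ∈ A.lcs U (k+2) := A.mem_prod hy huU
          rw [hbot2, Submodule.mem_bot] at hm
          exact hyne (hinj 1 y (hled k hy) (by rw [pow_one]; exact hm))
      obtain ⟨n, hn⟩ := hUnil
      cases n with
      | zero =>
        apply hUU
        rw [show A.lcs U 0 = U from rfl] at hn
        rw [hn, eq_bot_iff, prod_le_iff]
        intro m hm n hn2
        rw [Submodule.mem_bot] at hm ⊢
        rw [hm, map_zero, LinearMap.zero_apply]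
      | succ k => exact hchain k hn

end LeibnizAlg

/-- Let `L` be a monolithic Leibniz algebra.  Then `L` is a strongly
solvable A-algebra if and only if `L` is metabelian and `L = L² ∔ B` for some subalgebra
`B` of `L` such that `[L², b] = L²` for every nonzero `b ∈ B`. -/
theorem monolithic_strongly_solvable_A_algebra_iff
    {F L : Type*} [Field F] [AddCommGroup L] [Module F L] [FiniteDimensional F L]
    (A : LeibnizAlg F L)
    (W : Submodule F L) (hW : A.IsMinimalIdeal W)
    (hmono : ∀ I : Submodule F L, A.IsMinimalIdeal I → I = W) :
    (A.IsNilpotentSub (A.derSeries 1) ∧ A.IsAAlgebra) ↔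
      (A.IsAbelian (A.derSeries 1) ∧
        ∃ B : Submodule F L, A.IsSubalgebra B ∧
          A.derSeries 1 ⊓ B = ⊥ ∧ A.derSeries 1 ⊔ B = ⊤ ∧
          ∀ b ∈ B, b ≠ 0 →
            Submodule.map (A.bracket.flip b) (A.derSeries 1) = A.derSeries 1) := by
  constructor
  · rintro ⟨hnil, hA⟩
    exact A.forward_dir hW.2.1 hmono hnil hA
  · rintro ⟨hab, B, hBsub, hinf, hsup, hbmap⟩
    exact A.reverse_dir hab hinf hsup hbmap
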